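/- Let L : ℂ[x] → ℂ be a linear functional admitting monic orthogonal polynomials {p_n}_{n≥0} with normalizations h_n. Suppose φ ∈ ℂ[x] is monic with deg φ = d₁, ψ ∈ ℂ[x] has deg ψ = d₂ ≥ 1, and L[φ·Δp] = L[ψ·p] for every p ∈ ℂ[x]. Set s = max(d₁ − 2, d₂ − 1), and assume that if d₁ = d₂ + 1 then the leading coefficient ψ_{d₂} of ψ satisfies ψ_{d₂} ≠ n − s for every n ∈ ℕ₀. Then for every integer n > s there exist complex numbers ε_{n,k} (n − s ≤ k ≤ n + d₁) with ε_{n,n−s} ≠ 0 such that φ·Δp_{n+1} = ∑_{k=n−s}^{n+d₁} ε_{n,k} p_k. -/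

import Mathlib

open Polynomial Finset

/-- The forward difference of a polynomial: `(Δp)(x) = p(x+1) − p(x)`. -/
noncomputable def polyDelta (p : Polynomial ℂ) : Polynomial ℂ :=
  p.comp (X + C 1) - p

lemma comp_coeff (q : Polynomial ℂ) (N : ℕ) (h : q.natDegree ≤ N) (j : ℕ) :
    (q.comp (X + C 1)).coeff j = ∑ i ∈ Finset.range (N + 1), q.coeff i * (i.choose j) := by
  have hC : (X + C 1 : Polynomial ℂ) = X + 1 := by simp
  conv_lhs => rw [q.as_sum_range' (N + 1) (Nat.lt_succ_of_le h)]
  rw [Polynomial.comp, eval₂_finset_sum, finset_sum_coeff]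
  refine Finset.sum_congr rfl fun i _ => ?_
  rw [eval₂_monomial, coeff_C_mul, hC, coeff_X_add_one_pow]

lemma polyDelta_coeff_eq_zero (q : Polynomial ℂ) (j : ℕ) (hj : q.natDegree ≤ j) :
    (polyDelta q).coeff j = 0 := by
  rw [polyDelta, coeff_sub, comp_coeff q j hj, sub_eq_zero]
  rw [Finset.sum_eq_single j]
  · simp
  · intro i hi hne
    rcases lt_or_gt_of_ne hne with h1 | h1
    · rw [Nat.choose_eq_zero_of_lt h1, Nat.cast_zero, mul_zero]
    · rw [coeff_eq_zero_of_natDegree_lt (lt_of_le_of_lt hj h1), zero_mul]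
  · intro hj'; simp at hj'

lemma natDegree_polyDelta_le (q : Polynomial ℂ) (N : ℕ) (h : q.natDegree ≤ N + 1) :
    (polyDelta q).natDegree ≤ N := by
  rw [natDegree_le_iff_coeff_eq_zero]
  intro j hj
  exact polyDelta_coeff_eq_zero q j (le_trans h hj)

lemma polyDelta_coeff_top (q : Polynomial ℂ) (N : ℕ) (h : q.natDegree ≤ N + 1) :
    (polyDelta q).coeff N = (N + 1) * q.coeff (N + 1) := by
  rw [polyDelta, coeff_sub, comp_coeff q (N + 1) h]
  rw [Finset.sum_range_succ, Finset.sum_range_succ]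
  rw [Finset.sum_eq_zero fun i hi => by
    rw [Nat.choose_eq_zero_of_lt (Finset.mem_range.mp hi), Nat.cast_zero, mul_zero]]
  simp [mul_comm]

lemma coeff_p_self (p : ℕ → Polynomial ℂ)
    (hmonic : ∀ n, (p n).Monic) (hdeg : ∀ n, (p n).natDegree = n) (n : ℕ) :
    (p n).coeff n = 1 := by
  have := (hmonic n).leadingCoeff
  rwa [leadingCoeff, hdeg] at this

lemma exists_expansion (p : ℕ → Polynomial ℂ)
    (hmonic : ∀ n, (p n).Monic) (hdeg : ∀ n, (p n).natDegree = n) :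
    ∀ N (q : Polynomial ℂ), q.natDegree ≤ N →
      ∃ c : ℕ → ℂ, q = ∑ k ∈ Finset.range (N + 1), C (c k) * p k := by
  intro N
  induction N with
  | zero =>
    intro q hq
    refine ⟨fun _ => q.coeff 0, ?_⟩
    have h0 : p 0 = 1 := ((hmonic 0).natDegree_eq_zero).mp (hdeg 0)
    conv_lhs => rw [eq_C_of_natDegree_le_zero hq]
    rw [Finset.sum_range_one, h0, mul_one]
  | succ N ih =>
    intro q hq
    have hq' : (q - C (q.coeff (N + 1)) * p (N + 1)).natDegree ≤ N := by
      rw [natDegree_le_iff_coeff_eq_zero]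
      intro j hj
      rw [coeff_sub, coeff_C_mul]
      rcases eq_or_lt_of_le (Nat.succ_le_of_lt hj) with h1 | h1
      · rw [← h1, coeff_p_self p hmonic hdeg, mul_one, sub_self]
      · have e1 : q.coeff j = 0 := coeff_eq_zero_of_natDegree_lt (lt_of_le_of_lt hq h1)
        have e2 : (p (N + 1)).coeff j = 0 :=
          coeff_eq_zero_of_natDegree_lt (by rw [hdeg]; exact h1)
        rw [e1, e2, mul_zero, sub_zero]
    obtain ⟨c', hc'⟩ := ih _ hq'
    refine ⟨fun k => if k = N + 1 then q.coeff (N + 1) else c' k, ?_⟩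
    rw [Finset.sum_range_succ]
    simp only [if_pos rfl]
    have hsum : ∑ k ∈ Finset.range (N + 1),
        C (if k = N + 1 then q.coeff (N + 1) else c' k) * p k
        = ∑ k ∈ Finset.range (N + 1), C (c' k) * p k := by
      refine Finset.sum_congr rfl fun k hk => ?_
      rw [if_neg (by have := Finset.mem_range.mp hk; omega)]
    rw [hsum, ← hc']
    simp

lemma L_expansion (L : Polynomial ℂ →ₗ[ℂ] ℂ) (p : ℕ → Polynomial ℂ) (h : ℕ → ℂ)
    (horth : ∀ k n, L (p k * p n) = if k = n then h n else 0)
    (N : ℕ) (c : ℕ → ℂ) (q : Polynomial ℂ)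
    (hc : q = ∑ k ∈ Finset.range (N + 1), C (c k) * p k) (j : ℕ) :
    L (q * p j) = if j ∈ Finset.range (N + 1) then c j * h j else 0 := by
  rw [hc, Finset.sum_mul]
  have : ∀ k, C (c k) * p k * p j = c k • (p k * p j) := by
    intro k; rw [smul_eq_C_mul, mul_assoc]
  simp only [this]
  rw [map_sum]
  simp only [map_smul, horth, smul_eq_mul]
  rw [Finset.sum_congr rfl (fun k _ => by rw [mul_ite, mul_zero])]
  rw [Finset.sum_ite_eq' (Finset.range (N + 1)) j fun k => c k * h j]

lemma L_mul_p_eq_zero (L : Polynomial ℂ →ₗ[ℂ] ℂ) (p : ℕ → Polynomial ℂ) (h : ℕ → ℂ)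
    (hmonic : ∀ n, (p n).Monic) (hdeg : ∀ n, (p n).natDegree = n)
    (horth : ∀ k n, L (p k * p n) = if k = n then h n else 0)
    (q : Polynomial ℂ) (N : ℕ) (hq : q.natDegree ≤ N) (j : ℕ) (hj : N < j) :
    L (q * p j) = 0 := by
  obtain ⟨c, hc⟩ := exists_expansion p hmonic hdeg N q hq
  rw [L_expansion L p h horth N c q hc j, if_neg (by simp; omega)]

lemma L_mul_p_coeff (L : Polynomial ℂ →ₗ[ℂ] ℂ) (p : ℕ → Polynomial ℂ) (h : ℕ → ℂ)
    (hmonic : ∀ n, (p n).Monic) (hdeg : ∀ n, (p n).natDegree = n)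
    (horth : ∀ k n, L (p k * p n) = if k = n then h n else 0)
    (q : Polynomial ℂ) (j : ℕ) (hq : q.natDegree ≤ j) :
    L (q * p j) = q.coeff j * h j := by
  obtain ⟨c, hc⟩ := exists_expansion p hmonic hdeg j q hq
  rw [L_expansion L p h horth j c q hc j, if_pos (by simp)]
  have : q.coeff j = c j := by
    rw [hc, finset_sum_coeff, Finset.sum_eq_single j]
    · rw [coeff_C_mul, coeff_p_self p hmonic hdeg, mul_one]
    · intro k hk hne
      rw [coeff_C_mul, coeff_eq_zero_of_natDegree_lt
        (by rw [hdeg]; exact lt_of_le_of_ne (Nat.lt_succ_iff.mp (Finset.mem_range.mp hk)) hne),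
        mul_zero]
    · intro hj'; simp at hj'
  rw [this]

lemma polyDelta_of_natDegree_zero (q : Polynomial ℂ) (hq : q.natDegree = 0) :
    polyDelta q = 0 := by
  ext j
  rw [polyDelta_coeff_eq_zero q j (by omega), coeff_zero]

lemma key_pearson (L : Polynomial ℂ →ₗ[ℂ] ℂ) (φ ψ : Polynomial ℂ)
    (hPearson : ∀ q : Polynomial ℂ, L (φ * polyDelta q) = L (ψ * q))
    (a b : Polynomial ℂ) :
    L (φ * polyDelta a * (b.comp (X - C 1)).comp (X + C 1)) =
      L ((ψ * b.comp (X - C 1) - φ * polyDelta (b.comp (X - C 1))) * a) := by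
  set r := b.comp (X - C 1) with hr
  have hprod : polyDelta (a * r) = polyDelta a * r.comp (X + C 1) + a * polyDelta r := by
    unfold polyDelta
    rw [mul_comp]
    ring
  have e1 : φ * polyDelta a * r.comp (X + C 1)
      = φ * polyDelta (a * r) - φ * polyDelta r * a := by
    rw [hprod]; ring
  rw [e1, map_sub, hPearson]
  have e2 : ψ * (a * r) = ψ * r * a := by ring
  rw [e2, ← map_sub, ← sub_mul]

lemma comp_sub_comp_add (b : Polynomial ℂ) :
    (b.comp (X - C 1)).comp (X + C 1) = b := by
  rw [comp_assoc]
  have : (X - C 1 : Polynomial ℂ).comp (X + C 1) = X := by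
    rw [sub_comp, X_comp, C_comp]; ring
  rw [this, comp_X]

/-- Structure relation for a `Δ`-semiclassical functional: if `L` admits MOPs `{p_n}`
and satisfies the Pearson equation `L[φ·Δp] = L[ψ·p]` (with the admissibility
condition when `deg φ = deg ψ + 1`), then for `n > s = max(deg φ − 2, deg ψ − 1)`
there holds `φ·Δp_{n+1} = ∑_{k=n−s}^{n+deg φ} ε_{n,k} p_k` with `ε_{n,n−s} ≠ 0`. -/
theorem structure_relation_of_semiclassical (L : Polynomial ℂ →ₗ[ℂ] ℂ)
    (p : ℕ → Polynomial ℂ) (h : ℕ → ℂ)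
    (hmonic : ∀ n, (p n).Monic) (hdeg : ∀ n, (p n).natDegree = n)
    (hh : ∀ n, h n ≠ 0)
    (horth : ∀ k n, L (p k * p n) = if k = n then h n else 0)
    (φ ψ : Polynomial ℂ) (hφ : φ.Monic) (hψ : 1 ≤ ψ.natDegree)
    (hPearson : ∀ q : Polynomial ℂ, L (φ * polyDelta q) = L (ψ * q))
    (s : ℕ) (hs : s = max (φ.natDegree - 2) (ψ.natDegree - 1))
    (hadm : φ.natDegree = ψ.natDegree + 1 →
      ∀ n : ℕ, ψ.leadingCoeff ≠ (n : ℂ) - (s : ℂ)) :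
    ∀ n : ℕ, s < n → ∃ ε : ℕ → ℂ, ε (n - s) ≠ 0 ∧
      φ * polyDelta (p (n + 1)) =
        ∑ k ∈ Finset.Icc (n - s) (n + φ.natDegree), C (ε k) * p k := by
  intro n hn
  set d₁ := φ.natDegree with hd₁def
  set d₂ := ψ.natDegree with hd₂def
  have hmax := max_choice (d₁ - 2) (d₂ - 1)
  have hd1 : d₁ ≤ s + 2 := by
    have := le_max_left (d₁ - 2) (d₂ - 1); omega
  have hd2 : d₂ ≤ s + 1 := by
    have := le_max_right (d₁ - 2) (d₂ - 1); omega
  set q := φ * polyDelta (p (n + 1)) with hqdef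
  have hΔdeg : (polyDelta (p (n + 1))).natDegree ≤ n :=
    natDegree_polyDelta_le _ n (by rw [hdeg])
  have hqdeg : q.natDegree ≤ n + d₁ := by
    refine natDegree_mul_le.trans ?_
    omega
  obtain ⟨c, hc⟩ := exists_expansion p hmonic hdeg (n + d₁) q hqdeg
  -- facts about r_k
  have hrdeg : ∀ k : ℕ, ((p k).comp (X - C 1)).natDegree = k := by
    intro k
    rw [natDegree_comp, natDegree_X_sub_C, mul_one, hdeg]
  have hrmonic : ∀ k : ℕ, ((p k).comp (X - C 1)).Monic :=
    fun k => (hmonic k).comp_X_sub_C 1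
  -- the L-identity
  have hkey : ∀ k : ℕ, L (q * p k) =
      L ((ψ * (p k).comp (X - C 1) - φ * polyDelta ((p k).comp (X - C 1))) * p (n + 1)) := by
    intro k
    have := key_pearson L φ ψ hPearson (p (n + 1)) (p k)
    rw [hqdef]
    rwa [comp_sub_comp_add] at this
  -- vanishing for k < n - s
  have hvan : ∀ k : ℕ, k < n - s → c k = 0 := by
    intro k hk
    set r := (p k).comp (X - C 1) with hrdef
    have hgdeg : (ψ * r - φ * polyDelta r).natDegree ≤ n := by
      refine (natDegree_sub_le _ _).trans (max_le ?_ ?_)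
      · refine natDegree_mul_le.trans ?_
        rw [hrdeg k]; omega
      · rcases Nat.eq_zero_or_pos k with h0 | h0
        · rw [polyDelta_of_natDegree_zero r (by rw [hrdeg k, h0]), mul_zero,
            natDegree_zero]; omega
        · refine natDegree_mul_le.trans ?_
          have := natDegree_polyDelta_le r (k - 1) (by rw [hrdeg k]; omega)
          omega
    have hz : L (q * p k) = 0 := by
      rw [hkey k, ← hrdef]
      exact L_mul_p_eq_zero L p h hmonic hdeg horth _ n hgdeg (n + 1) (by omega)
    have := L_expansion L p h horth (n + d₁) c q hc k
    rw [hz, if_pos (by simp; omega)] at this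
    rcases mul_eq_zero.mp this.symm with h1 | h1
    · exact h1
    · exact absurd h1 (hh k)
  -- nonvanishing at k = n - s
  have hne : c (n - s) ≠ 0 := by
    set m := n - s with hmdef
    have hm1 : 1 ≤ m := by omega
    set r := (p m).comp (X - C 1) with hrdef
    set g := ψ * r - φ * polyDelta r with hgdef
    have hΔrdeg : (polyDelta r).natDegree ≤ m - 1 :=
      natDegree_polyDelta_le r (m - 1) (by rw [hrdeg m]; omega)
    have hgdeg : g.natDegree ≤ n + 1 := by
      refine (natDegree_sub_le _ _).trans (max_le ?_ ?_)
      · refine natDegree_mul_le.trans ?_; rw [hrdeg m]; omega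
      · refine natDegree_mul_le.trans ?_; omega
    have hLg : L (q * p m) = g.coeff (n + 1) * h (n + 1) := by
      rw [hkey m, ← hrdef, ← hgdef]
      exact L_mul_p_coeff L p h hmonic hdeg horth g (n + 1) hgdeg
    -- compute the coefficient
    have hrcoeff : r.coeff m = 1 := by
      have := (hrmonic m).coeff_natDegree
      rwa [hrdeg m] at this
    have hψr : (ψ * r).coeff (n + 1) = ψ.coeff (s + 1) := by
      have e : n + 1 = (s + 1) + (n - s) := by omega
      rw [e, coeff_mul_add_eq_of_natDegree_le hd2 (le_of_eq (hrdeg m)), hrcoeff, mul_one]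
    have hΔr : (polyDelta r).coeff (m - 1) = (m : ℂ) := by
      have := polyDelta_coeff_top r (m - 1) (by rw [hrdeg m]; omega)
      rw [this]
      have e : m - 1 + 1 = m := by omega
      rw [e, hrcoeff, mul_one]
      have e2 : ((m - 1 : ℕ) : ℂ) = (m : ℂ) - 1 := by
        rw [Nat.cast_sub hm1]; simp
      rw [e2]; ring
    have hφΔr : (φ * polyDelta r).coeff (n + 1) = φ.coeff (s + 2) * (m : ℂ) := by
      have e : n + 1 = (s + 2) + (m - 1) := by omega
      rw [e, coeff_mul_add_eq_of_natDegree_le hd1 hΔrdeg, hΔr]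
    have hgcoeff : g.coeff (n + 1) = ψ.coeff (s + 1) - φ.coeff (s + 2) * (m : ℂ) := by
      rw [hgdef, coeff_sub, hψr, hφΔr]
    have hgne : g.coeff (n + 1) ≠ 0 := by
      rw [hgcoeff]
      by_cases h2 : d₂ = s + 1
      · have ha : ψ.coeff (s + 1) = ψ.leadingCoeff := by
          rw [leadingCoeff, ← hd₂def, h2]
        by_cases h1 : d₁ = s + 2
        · have hb : φ.coeff (s + 2) = 1 := by
            have := hφ.coeff_natDegree
            rwa [← hd₁def, h1] at this
          rw [ha, hb, one_mul]
          have hadm' := hadm (by omega) n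
          have hcast : ((m : ℕ) : ℂ) = (n : ℂ) - (s : ℂ) := by
            rw [hmdef, Nat.cast_sub (by omega)]
          rw [hcast]
          exact sub_ne_zero_of_ne hadm'
        · have hb : φ.coeff (s + 2) = 0 :=
            coeff_eq_zero_of_natDegree_lt (by omega)
          rw [ha, hb, zero_mul, sub_zero]
          refine leadingCoeff_ne_zero.mpr fun h0 => ?_
          rw [hd₂def, h0, natDegree_zero] at h2
          omega
      · have hs1 : 1 ≤ s := by omega
        have hd1eq : d₁ = s + 2 := by omega
        have ha : ψ.coeff (s + 1) = 0 := coeff_eq_zero_of_natDegree_lt (by omega)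
        have hb : φ.coeff (s + 2) = 1 := by
          have := hφ.coeff_natDegree
          rwa [← hd₁def, hd1eq] at this
        rw [ha, hb, one_mul, zero_sub, neg_ne_zero]
        exact Nat.cast_ne_zero.mpr (by omega)
    have := L_expansion L p h horth (n + d₁) c q hc m
    rw [hLg, if_pos (by simp; omega)] at this
    intro hc0
    rw [hc0, zero_mul] at this
    exact (mul_ne_zero hgne (hh (n + 1))) this
  refine ⟨c, hne, ?_⟩
  rw [hc]
  rw [Finset.range_eq_Ico, ← Finset.sum_Ico_consecutive _ (Nat.zero_le (n - s)) (by omega),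
    Finset.Ico_add_one_right_eq_Icc]
  rw [Finset.sum_eq_zero fun k hk => by
    rw [hvan k (Finset.mem_Ico.mp hk).2, map_zero, zero_mul]]
  rw [zero_add]
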